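/- arXiv:2505.03820 — 2 statements merged into one kernel-verified Lean document; each statement's English description precedes it below -/
import Mathlib

section
/- Rank of EDM corrupted by m faults: if D is the EDM of n points in ℝᵈ and P is a symmetric n×n matrix supported on the rows and columns indexed by a set S of size m (i.e., P_{ij} = 0 when i ∉ S and j ∉ S), then rank(D + P) ≤ min(d + 2 + 2m, n). -/
open Matrix

private lemma rank_add_le' {n : ℕ} (A B : Matrix (Fin n) (Fin n) ℝ) :
    (A + B).rank ≤ A.rank + B.rank := by
  rw [Matrix.rank, Matrix.rank, Matrix.rank, Matrix.mulVecLin_add]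
  have h : LinearMap.range (A.mulVecLin + B.mulVecLin) ≤
      LinearMap.range A.mulVecLin ⊔ LinearMap.range B.mulVecLin := by
    rintro y ⟨v, rfl⟩
    exact Submodule.add_mem_sup ⟨v, rfl⟩ ⟨v, rfl⟩
  exact (Submodule.finrank_mono h).trans
    (Submodule.finrank_add_le_finrank_add_finrank _ _)

private lemma rank_le_card_of_rows {n : ℕ} (S : Finset (Fin n))
    (A : Matrix (Fin n) (Fin n) ℝ) (h : ∀ i ∉ S, ∀ j, A i j = 0) :
    A.rank ≤ S.card := by
  classical
  have hfac : A = (Matrix.of fun i (s : S) => if (s : Fin n) = i then (1:ℝ) else 0) *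
      (Matrix.of fun (s : S) j => A s j) := by
    ext i j
    rw [Matrix.mul_apply]
    by_cases hi : i ∈ S
    · rw [Finset.sum_eq_single (⟨i, hi⟩ : S)]
      · simp
      · intro b _ hb
        have : (b : Fin n) ≠ i := fun e => hb (Subtype.ext e)
        simp [this]
      · simp
    · rw [h i hi]
      symm
      apply Finset.sum_eq_zero
      intro b _
      have : (b : Fin n) ≠ i := fun e => hi (e ▸ b.2)
      simp [this]
  calc A.rank ≤ (Matrix.of fun i (s : S) =>
        if (s : Fin n) = i then (1:ℝ) else 0).rank := by
        rw [hfac]; exact Matrix.rank_mul_le_left _ _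
    _ ≤ Fintype.card S := Matrix.rank_le_card_width _
    _ = S.card := Fintype.card_coe S

theorem corrupted_edm_rank_m_faults (n d m : ℕ)
    (x : Fin n → EuclideanSpace ℝ (Fin d))
    (S : Finset (Fin n)) (hS : S.card = m)
    (D P : Matrix (Fin n) (Fin n) ℝ)
    (hD : ∀ i j, D i j = ‖x i - x j‖ ^ 2)
    (hPsym : P.IsSymm)
    (hPsupp : ∀ i j, i ∉ S → j ∉ S → P i j = 0) :
    (D + P).rank ≤ min (d + 2 + 2 * m) n := by
  classical
  refine le_min ?_ ((D + P).rank_le_card_height.trans (Fintype.card_fin n).le)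
  -- pieces
  set u1 : Matrix (Fin n) (Fin 1) ℝ := Matrix.of fun i _ => ‖x i‖ ^ 2 with hu1
  set v1 : Matrix (Fin 1) (Fin n) ℝ := Matrix.of fun _ _ => (1:ℝ) with hv1
  set u2 : Matrix (Fin n) (Fin 1) ℝ := Matrix.of fun _ _ => (1:ℝ) with hu2
  set v2 : Matrix (Fin 1) (Fin n) ℝ := Matrix.of fun _ j => ‖x j‖ ^ 2 with hv2
  set XM : Matrix (Fin n) (Fin d) ℝ := Matrix.of fun i k => x i k with hXM
  set Y : Matrix (Fin d) (Fin n) ℝ := Matrix.of fun k j => (-2) * x j k with hY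
  set A : Matrix (Fin n) (Fin n) ℝ :=
    Matrix.of fun i j => if i ∈ S then P i j else 0 with hA
  set B : Matrix (Fin n) (Fin n) ℝ := P - A with hB
  have hdecomp : D + P = (((u1 * v1 + u2 * v2) + XM * Y) + A) + B := by
    ext i j
    have hPij : P i j = A i j + B i j := by simp [hB]
    have hinner : (inner ℝ (x i) (x j) : ℝ) = ∑ k, x i k * x j k := by
      simp [PiLp.inner_apply, RCLike.inner_apply, mul_comm]
    have hXY : (XM * Y) i j = -2 * ∑ k, x i k * x j k := by
      rw [Matrix.mul_apply]
      rw [Finset.mul_sum]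
      congr 1; ext k; simp [hXM, hY]; ring
    have h1 : (u1 * v1) i j = ‖x i‖ ^ 2 := by
      simp [Matrix.mul_apply, hu1, hv1]
    have h2 : (u2 * v2) i j = ‖x j‖ ^ 2 := by
      simp [Matrix.mul_apply, hu2, hv2]
    have hDij : D i j = ‖x i‖ ^ 2 - 2 * (inner ℝ (x i) (x j) : ℝ) + ‖x j‖ ^ 2 := by
      rw [hD i j]
      exact norm_sub_sq_real (x i) (x j)
    simp only [Matrix.add_apply, hDij, hPij, hXY, h1, h2, hinner]
    ring
  rw [hdecomp]
  have hb1 : (u1 * v1).rank ≤ 1 :=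
    (Matrix.rank_mul_le_left _ _).trans (Matrix.rank_le_width u1)
  have hb2 : (u2 * v2).rank ≤ 1 :=
    (Matrix.rank_mul_le_left _ _).trans (Matrix.rank_le_width u2)
  have hb3 : (XM * Y).rank ≤ d :=
    (Matrix.rank_mul_le_left _ _).trans (Matrix.rank_le_width XM)
  have hbA : A.rank ≤ m := by
    rw [← hS]
    exact rank_le_card_of_rows S A (fun i hi j => by simp [hA, hi])
  have hbB : B.rank ≤ m := by
    rw [← B.rank_transpose, ← hS]
    refine rank_le_card_of_rows S Bᵀ (fun j hj i => ?_)
    simp only [Matrix.transpose_apply, hB, Matrix.sub_apply, hA, Matrix.of_apply]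
    by_cases hi : i ∈ S
    · simp [hi]
    · simp [hi, hPsupp i j hi hj]
  calc ((((u1 * v1 + u2 * v2) + XM * Y) + A) + B).rank
      ≤ (((u1 * v1 + u2 * v2) + XM * Y) + A).rank + B.rank := rank_add_le' _ _
    _ ≤ (((u1 * v1 + u2 * v2) + XM * Y).rank + A.rank) + B.rank := by
        exact add_le_add_left (rank_add_le' _ _) _
    _ ≤ (((u1 * v1 + u2 * v2).rank + (XM * Y).rank) + A.rank) + B.rank := by
        exact add_le_add_left (add_le_add_left (rank_add_le' _ _) _) _
    _ ≤ ((((u1 * v1).rank + (u2 * v2).rank) + (XM * Y).rank) + A.rank) + B.rank := by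
        exact add_le_add_left (add_le_add_left (add_le_add_left (rank_add_le' _ _) _) _) _
    _ ≤ (((1 + 1) + d) + m) + m := by
        gcongr
    _ = d + 2 + 2 * m := by ring
end

section
/- Rank of geometric-centered corrupted EDM: under the assumptions of the previous statement, the matrix G = -(1/2)·J_n·(D + P)·J_n has rank at most min(d + 2m, n - 1). -/
open Matrix

section Aux

variable {n : ℕ}

private lemma matrix_rank_add_le (A B : Matrix (Fin n) (Fin n) ℝ) :
    (A + B).rank ≤ A.rank + B.rank := by
  classical
  rw [Matrix.rank, Matrix.rank, Matrix.rank, Matrix.mulVecLin_add]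
  have hsub : LinearMap.range (A.mulVecLin + B.mulVecLin) ≤
      LinearMap.range A.mulVecLin ⊔ LinearMap.range B.mulVecLin := by
    rintro y ⟨v, rfl⟩
    exact Submodule.add_mem_sup ⟨v, rfl⟩ ⟨v, rfl⟩
  exact le_trans (Submodule.finrank_mono hsub)
    (Submodule.finrank_add_le_finrank_add_finrank _ _)

private lemma matrix_rank_smul_le (c : ℝ) (A : Matrix (Fin n) (Fin n) ℝ) :
    (c • A).rank ≤ A.rank := by
  have h : c • A = (c • (1 : Matrix (Fin n) (Fin n) ℝ)) * A := by
    rw [Matrix.smul_mul, Matrix.one_mul]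
  rw [h]
  exact Matrix.rank_mul_le_right _ _

end Aux

set_option maxHeartbeats 1000000 in
theorem gcedm_corrupted_rank (n d m : ℕ)
    (x : Fin n → EuclideanSpace ℝ (Fin d))
    (S : Finset (Fin n)) (hS : S.card = m)
    (D P J G : Matrix (Fin n) (Fin n) ℝ)
    (hD : ∀ i j, D i j = ‖x i - x j‖ ^ 2)
    (hPsym : P.IsSymm)
    (hPsupp : ∀ i j, i ∉ S → j ∉ S → P i j = 0)
    (hJ : J = 1 - (n : ℝ)⁻¹ • Matrix.of (fun _ _ => (1 : ℝ)))
    (hG : G = -(1/2 : ℝ) • (J * (D + P) * J)) :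
    G.rank ≤ min (d + 2 * m) (n - 1) := by
  classical
  rcases Nat.eq_zero_or_pos n with hn | hn
  · subst hn
    have : G.rank ≤ 0 := by
      simpa using G.rank_le_card_width
    omega
  have hn0 : (n : ℝ) ≠ 0 := Nat.cast_ne_zero.mpr hn.ne'
  -- column and row sums of J are zero
  have hcol : ∀ j, ∑ k, J k j = 0 := by
    intro j
    simp only [hJ, Matrix.sub_apply, Matrix.smul_apply, Matrix.of_apply,
      Matrix.one_apply, smul_eq_mul, mul_one]
    rw [Finset.sum_sub_distrib]
    simp [Finset.sum_ite_eq, mul_inv_cancel₀ hn0]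
  have hrow : ∀ i, ∑ k, J i k = 0 := by
    intro i
    simp only [hJ, Matrix.sub_apply, Matrix.smul_apply, Matrix.of_apply,
      Matrix.one_apply, smul_eq_mul, mul_one]
    rw [Finset.sum_sub_distrib]
    simp [Finset.sum_ite_eq', mul_inv_cancel₀ hn0]
  -- rank G ≤ n - 1
  have hJ1 : J *ᵥ (fun _ => (1 : ℝ)) = 0 := by
    funext i
    simp only [Matrix.mulVec, dotProduct, mul_one, Pi.zero_apply]
    exact hrow i
  have hker : 0 < Module.finrank ℝ (LinearMap.ker J.mulVecLin) := by
    rw [Module.finrank_pos_iff_exists_ne_zero]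
    refine ⟨⟨(fun _ => (1 : ℝ)), ?_⟩, ?_⟩
    · simpa [Matrix.mulVecLin] using hJ1
    · intro h
      have h1 : (fun _ => (1 : ℝ)) = (0 : Fin n → ℝ) := congrArg Subtype.val h
      have := congrFun h1 ⟨0, hn⟩
      norm_num at this
  have hJrank : J.rank ≤ n - 1 := by
    have h := LinearMap.finrank_range_add_finrank_ker J.mulVecLin
    have hfr : Module.finrank ℝ (Fin n → ℝ) = n := by
      simp [Module.finrank_pi]
    rw [hfr] at h
    have : J.rank = Module.finrank ℝ (LinearMap.range J.mulVecLin) := rfl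
    omega
  have hGn : G.rank ≤ n - 1 := by
    rw [hG]
    refine le_trans (matrix_rank_smul_le _ _) ?_
    rw [Matrix.mul_assoc]
    exact le_trans (Matrix.rank_mul_le_left _ _) hJrank
  -- rank G ≤ d + 2m
  set u : Fin n → ℝ := fun i => ‖x i‖ ^ 2 with hu
  set M : Matrix (Fin n) (Fin d) ℝ := Matrix.of (fun i k => x i k) with hM
  set C : Matrix (Fin n) (Fin n) ℝ := Matrix.of (fun i _ => u i) with hC
  set R : Matrix (Fin n) (Fin n) ℝ := Matrix.of (fun _ j => u j) with hR
  have hDdecomp : D = C + R + (-2 : ℝ) • (M * Mᵀ) := by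
    funext i j
    have hinner : (M * Mᵀ) i j = inner ℝ (x i) (x j) := by
      rw [Matrix.mul_apply]
      rw [PiLp.inner_apply]
      simp [hM, Matrix.transpose_apply, RCLike.inner_apply, mul_comm]
    have := @norm_sub_sq_real (EuclideanSpace ℝ (Fin d)) _ _ (x i) (x j)
    simp only [Matrix.add_apply, Matrix.smul_apply, hD, hC, hR, Matrix.of_apply,
      smul_eq_mul, hinner, hu]
    rw [this]
    ring
  have hCJ : C * J = 0 := by
    funext i j
    rw [Matrix.mul_apply]
    simp only [hC, Matrix.of_apply, Matrix.zero_apply]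
    rw [← Finset.mul_sum, hcol j, mul_zero]
  have hJR : J * R = 0 := by
    funext i j
    rw [Matrix.mul_apply]
    simp only [hR, Matrix.of_apply, Matrix.zero_apply]
    rw [← Finset.sum_mul, hrow i, zero_mul]
  have hJDJ : J * D * J = (-2 : ℝ) • (J * (M * Mᵀ) * J) := by
    rw [hDdecomp]
    rw [Matrix.mul_add, Matrix.mul_add, Matrix.add_mul, Matrix.add_mul]
    rw [Matrix.mul_assoc J C J, hCJ, Matrix.mul_zero, hJR, Matrix.zero_mul]
    rw [Matrix.mul_smul, Matrix.smul_mul]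
    simp
  have hJDJrank : (J * D * J).rank ≤ d := by
    rw [hJDJ]
    refine le_trans (matrix_rank_smul_le _ _) ?_
    refine le_trans (Matrix.rank_mul_le_left (J * (M * Mᵀ)) J) ?_
    refine le_trans (Matrix.rank_mul_le_right J (M * Mᵀ)) ?_
    refine le_trans (Matrix.rank_mul_le_right M Mᵀ) ?_
    exact le_trans (Mᵀ).rank_le_card_height (le_of_eq (Fintype.card_fin d))
  -- rank of P ≤ 2m
  set w : Fin n → ℝ := fun i => if i ∈ S then 1 else 0 with hw
  set E : Matrix (Fin n) (Fin n) ℝ := Matrix.diagonal w with hE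
  have hErank : E.rank = m := by
    rw [hE, Matrix.rank_diagonal]
    have hiff : ∀ i, w i ≠ 0 ↔ i ∈ S := by
      intro i
      by_cases h : i ∈ S <;> simp [hw, h]
    calc Fintype.card {i // w i ≠ 0}
        = Fintype.card {i // i ∈ S} := Fintype.card_congr (Equiv.subtypeEquivRight hiff)
      _ = S.card := Fintype.card_coe S
      _ = m := hS
  have hPdecomp : P = E * P + (P - E * P) := by abel
  have hP2 : (P - E * P) = (P - E * P) * E := by
    funext i j
    rw [Matrix.mul_apply]
    have hrow' : ∀ i', (P - E * P) i' j = (1 - w i') * P i' j := by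
      intro i'
      simp [hE, Matrix.sub_apply, Matrix.mul_apply, Matrix.diagonal_apply, Finset.sum_ite_eq]
      ring
    rw [hrow']
    have : ∀ k, (P - E * P) i k * E k j = if k = j then (1 - w i) * P i j * w j else 0 := by
      intro k
      simp only [hE, Matrix.diagonal_apply]
      by_cases h : k = j <;> simp [h, hrow', sub_mul]
    rw [Finset.sum_congr rfl (fun k _ => this k)]
    rw [Finset.sum_ite_eq']
    simp only [Finset.mem_univ, if_true]
    by_cases hj : j ∈ S
    · simp [hw, hj]
    · by_cases hi : i ∈ S
      · simp [hw, hi, hj]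
      · simp [hw, hj, hPsupp i j hi hj]
  have hPrank : P.rank ≤ 2 * m := by
    calc P.rank = (E * P + (P - E * P)).rank := by rw [← hPdecomp]
      _ ≤ (E * P).rank + (P - E * P).rank := matrix_rank_add_le _ _
      _ ≤ E.rank + ((P - E * P) * E).rank := by
          rw [← hP2]
          exact Nat.add_le_add_right (Matrix.rank_mul_le_left _ _) _
      _ ≤ E.rank + E.rank := Nat.add_le_add_left (Matrix.rank_mul_le_right _ _) _
      _ = 2 * m := by rw [hErank]; ring
  have hJPJrank : (J * P * J).rank ≤ 2 * m := by
    refine le_trans (Matrix.rank_mul_le_left _ _) ?_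
    exact le_trans (Matrix.rank_mul_le_right _ _) hPrank
  have hGd : G.rank ≤ d + 2 * m := by
    rw [hG]
    refine le_trans (matrix_rank_smul_le _ _) ?_
    have : J * (D + P) * J = J * D * J + J * P * J := by
      rw [Matrix.mul_add, Matrix.add_mul]
    rw [this]
    exact le_trans (matrix_rank_add_le _ _) (Nat.add_le_add hJDJrank hJPJrank)
  exact le_min hGd hGn
end
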